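/- arXiv:math/0604311 — 2 statements merged into one kernel-verified Lean document; each statement's English description precedes it below -/
import Mathlib

section
/- Let T > 0, 0 < δ < 1, and let f : [0,T] → ℝ be a measurable function satisfying δ·t ≤ f(t) ≤ δ⁻¹·t for all t ∈ [0,T]. If U is uniformly distributed on [0,T], then the variance of f(U) satisfies Var(f(U)) ≥ δ⁴·T²/64. -/
open MeasureTheory ProbabilityTheory Set

/-- variance lower bound for a function squeezed between `δ t` and `δ⁻¹ t`
under the uniform distribution on `[0, T]`. -/
theorem variance_lower_bound_of_squeeze
    (T δ : ℝ) (hT : 0 < T) (hδ : 0 < δ) (hδ1 : δ < 1)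
    (f : ℝ → ℝ) (hf : Measurable f)
    (hlb : ∀ t ∈ Icc (0:ℝ) T, δ * t ≤ f t)
    (hub : ∀ t ∈ Icc (0:ℝ) T, f t ≤ δ⁻¹ * t) :
    δ ^ 4 * T ^ 2 / 64 ≤
      variance f ((ENNReal.ofReal T)⁻¹ • volume.restrict (Icc (0:ℝ) T)) := by
  set μ : Measure ℝ := (ENNReal.ofReal T)⁻¹ • volume.restrict (Icc (0:ℝ) T) with hμdef
  have hT0 : ENNReal.ofReal T ≠ 0 := ne_of_gt (ENNReal.ofReal_pos.2 hT)
  have hprob : IsProbabilityMeasure μ := by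
    constructor
    rw [hμdef, Measure.smul_apply, Measure.restrict_apply_univ, Real.volume_Icc,
      smul_eq_mul, sub_zero, ENNReal.inv_mul_cancel hT0 ENNReal.ofReal_ne_top]
  -- a.e. membership in the interval
  have hmem : ∀ᵐ x ∂μ, x ∈ Icc (0:ℝ) T := by
    rw [hμdef]
    exact Measure.ae_smul_measure (ae_restrict_mem measurableSet_Icc) _
  -- boundedness, hence Memℒp 2
  have hbd : ∀ᵐ x ∂μ, ‖f x‖ ≤ δ⁻¹ * T := by
    filter_upwards [hmem] with x hx
    rw [Real.norm_eq_abs, abs_le]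
    constructor
    · nlinarith [hlb x hx, hx.1, hx.2, inv_pos.2 hδ]
    · have := hub x hx
      have : δ⁻¹ * x ≤ δ⁻¹ * T := by
        apply mul_le_mul_of_nonneg_left hx.2 (inv_pos.2 hδ).le
      linarith [hub x hx]
  have hL2 : MemLp f 2 μ := MemLp.of_bound hf.aestronglyMeasurable _ hbd
  set m : ℝ := ∫ x, f x ∂μ with hmdef
  -- mean lower bound : m ≥ δ T / 2
  have hTinv : ((ENNReal.ofReal T)⁻¹).toReal = T⁻¹ := by
    rw [ENNReal.toReal_inv, ENNReal.toReal_ofReal hT.le]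
  have hint_f : Integrable f μ := hL2.integrable (by norm_num)
  have hint_id : Integrable (fun x : ℝ => δ * x) μ := by
    apply Integrable.mono' (integrable_const (δ⁻¹ * T)) (by fun_prop)
    filter_upwards [hmem] with x hx
    rw [Real.norm_eq_abs, abs_of_nonneg (by nlinarith [hx.1])]
    have h1 : δ * x ≤ δ * T := mul_le_mul_of_nonneg_left hx.2 hδ.le
    have h2 : δ * T ≤ δ⁻¹ * T := by
      apply mul_le_mul_of_nonneg_right _ hT.le
      calc δ ≤ 1 := hδ1.le
      _ ≤ δ⁻¹ := (one_le_inv_iff₀).2 ⟨hδ, hδ1.le⟩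
    linarith
  have hmean : δ * T / 2 ≤ m := by
    have h1 : ∫ x, δ * x ∂μ ≤ m := by
      rw [hmdef]
      apply integral_mono_ae hint_id hint_f
      filter_upwards [hmem] with x hx using hlb x hx
    have h2 : ∫ x, δ * x ∂μ = δ * T / 2 := by
      rw [hμdef, integral_smul_measure, hTinv, integral_Icc_eq_integral_Ioc,
        ← intervalIntegral.integral_of_le hT.le, intervalIntegral.integral_const_mul,
        integral_id]
      field_simp
      rw [smul_eq_mul]; field_simp; ring
    linarith [h1, h2.symm.le]
  -- variance as an integral
  have hvar : variance f μ = ∫ x, (f x - m) ^ 2 ∂μ := by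
    rw [variance_eq_integral hf.aemeasurable]
  rw [hvar]
  set s : ℝ := δ ^ 2 * T / 4 with hsdef
  have hs0 : 0 < s := by positivity
  have hδ2 : δ ^ 2 ≤ 1 := by nlinarith
  have hsT : s ≤ T := by rw [hsdef]; nlinarith
  have hint_sq : Integrable (fun x => (f x - m) ^ 2) μ := by
    have := (hL2.sub (memLp_const m)).integrable_sq
    simpa [Pi.sub_apply, sq] using this
  -- restrict to [0, s]
  have step1 : ∫ x in Icc (0:ℝ) s, (f x - m) ^ 2 ∂μ ≤ ∫ x, (f x - m) ^ 2 ∂μ :=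
    setIntegral_le_integral hint_sq (ae_of_all _ fun x => sq_nonneg _)
  have hptwise : ∀ x ∈ Icc (0:ℝ) s, (δ * T / 4) ^ 2 ≤ (f x - m) ^ 2 := by
    intro x hx
    have hxT : x ∈ Icc (0:ℝ) T := ⟨hx.1, hx.2.trans hsT⟩
    have h1 : f x ≤ δ⁻¹ * s := by
      have := hub x hxT
      have h2 : δ⁻¹ * x ≤ δ⁻¹ * s := mul_le_mul_of_nonneg_left hx.2 (inv_pos.2 hδ).le
      linarith
    have h3 : δ⁻¹ * s = δ * T / 4 := by
      rw [hsdef]; field_simp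
    have h4 : δ * T / 4 ≤ m - f x := by
      rw [h3] at h1; linarith [hmean]
    nlinarith [sq_nonneg (m - f x - δ * T / 4), h4]
  have step2 : (δ * T / 4) ^ 2 * (μ (Icc (0:ℝ) s)).toReal
      ≤ ∫ x in Icc (0:ℝ) s, (f x - m) ^ 2 ∂μ :=
    by have := setIntegral_ge_of_const_le_real measurableSet_Icc (measure_ne_top μ _) hptwise
        hint_sq.integrableOn
       rwa [measureReal_def] at this
  have hμs : (μ (Icc (0:ℝ) s)).toReal = s / T := by
    rw [hμdef, Measure.smul_apply, Measure.restrict_apply measurableSet_Icc,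
      inter_eq_left.2 (Icc_subset_Icc le_rfl hsT), Real.volume_Icc, sub_zero,
      smul_eq_mul, ENNReal.toReal_mul, hTinv, ENNReal.toReal_ofReal hs0.le]
    rw [div_eq_mul_inv, mul_comm]
  have hfinal : (δ * T / 4) ^ 2 * (s / T) = δ ^ 4 * T ^ 2 / 64 := by
    rw [hsdef]; field_simp; ring
  calc δ ^ 4 * T ^ 2 / 64 = (δ * T / 4) ^ 2 * (μ (Icc (0:ℝ) s)).toReal := by
        rw [hμs, hfinal]
    _ ≤ ∫ x in Icc (0:ℝ) s, (f x - m) ^ 2 ∂μ := step2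
    _ ≤ ∫ x, (f x - m) ^ 2 ∂μ := step1
end

section
/- Let X be a Lévy process on ℝ with X₀ = 0 such that E[e^{pX_t}] = e^{tΨ(p)} < ∞ for all p ∈ ℝ, where Ψ is the Laplace exponent. Then for every p ≥ 1 there is a constant K = K(p,T) such that P(inf_{0≤t≤T} X_t ≤ log ε) ≤ K·ε^p for all sufficiently small ε > 0; consequently for S_t = S₀ e^{X_t}, P(inf_{0≤t≤T} S_t ≤ ε) = o(ε^q) as ε → 0 for every q < p, for every p, i.e. the running infimum of S has all negative moments. -/
open MeasureTheory ProbabilityTheory Set Filter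
open scoped ENNReal

lemma aux_cheb {Ω : Type*} [MeasurableSpace Ω] (P : Measure Ω) [IsProbabilityMeasure P]
    (g : Ω → ℝ) (hg0 : ∀ ω, 0 ≤ g ω) (hint : Integrable g P) {r : ℝ} (hr : 0 < r)
    {E : Set Ω} (hE : ∀ ω ∈ E, r ≤ g ω) :
    P E ≤ ENNReal.ofReal ((∫ ω, g ω ∂P) / r) := by
  have h1 : P E ≤ P {ω | r ≤ g ω} := measure_mono hE
  have h2 := mul_meas_ge_le_integral_of_nonneg (ae_of_all P hg0) hint r
  have hfin : P {ω | r ≤ g ω} ≠ ⊤ := measure_ne_top _ _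
  have h3 : (P {ω | r ≤ g ω}).toReal ≤ (∫ ω, g ω ∂P) / r := by
    rw [le_div_iff₀ hr]; rw [measureReal_def] at h2; linarith
  calc P E ≤ P {ω | r ≤ g ω} := h1
    _ = ENNReal.ofReal (P {ω | r ≤ g ω}).toReal := (ENNReal.ofReal_toReal hfin).symm
    _ ≤ ENNReal.ofReal _ := ENNReal.ofReal_le_ofReal h3

lemma aux_reflection {Ω : Type*} [MeasurableSpace Ω] (P : Measure Ω) [IsProbabilityMeasure P]
    (X : ℝ → Ω → ℝ) (T a c : ℝ)
    (hmeas : ∀ t, Measurable (X t))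
    (hindep : ∀ s t : ℝ, 0 ≤ s → s ≤ t →
      Indep (⨆ u ∈ Iic s, MeasurableSpace.comap (X u) inferInstance)
        (MeasurableSpace.comap (fun ω => X t ω - X s ω) inferInstance) P)
    (hhalf : ∀ t ∈ Icc 0 T, P {ω | a < X T ω - X t ω} ≤ ENNReal.ofReal (1/2))
    (F : Finset ℝ) (hF : ↑F ⊆ Icc 0 T) :
    P (⋃ t ∈ F, {ω | X t ω < c}) ≤ 2 * P {ω | X T ω < c + a} := by
  classical
  set A : ℝ → Set Ω := fun t =>
    {ω | X t ω < c} ∩ ⋂ u ∈ F.filter (fun u => u < t), {ω | X u ω < c}ᶜ with hA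
  have hcover : (⋃ t ∈ F, {ω | X t ω < c}) = ⋃ t ∈ F, A t := by
    ext ω
    simp only [mem_iUnion, exists_prop]
    constructor
    · rintro ⟨t, htF, htω⟩
      have hne : (F.filter (fun u => X u ω < c)).Nonempty := ⟨t, Finset.mem_filter.2 ⟨htF, htω⟩⟩
      set t₀ := (F.filter (fun u => X u ω < c)).min' hne with ht₀
      have ht₀mem := (F.filter (fun u => X u ω < c)).min'_mem hne
      rw [Finset.mem_filter] at ht₀mem
      refine ⟨t₀, ht₀mem.1, ht₀mem.2, ?_⟩
      simp only [mem_iInter, mem_compl_iff, mem_setOf_eq]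
      intro u hu
      rw [Finset.mem_filter] at hu
      intro hXu
      exact absurd (Finset.min'_le (F.filter (fun u => X u ω < c)) u
        (Finset.mem_filter.2 ⟨hu.1, hXu⟩)) (not_le.2 hu.2)
    · rintro ⟨t, htF, htω⟩
      exact ⟨t, htF, htω.1⟩
  have hAmeas : ∀ t, MeasurableSet (A t) := by
    intro t
    refine ((hmeas t) measurableSet_Iio).inter ?_
    exact MeasurableSet.biInter (Finset.countable_toSet _)
      (fun u _ => ((hmeas u) measurableSet_Iio).compl)
  have hdisj0 : ∀ t t' : ℝ, t ∈ F → t' ∈ F → t < t' → Disjoint (A t) (A t') := by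
    intro t t' ht ht' hlt
    rw [Set.disjoint_left]
    rintro ω ⟨hω1, -⟩ ⟨-, hω2⟩
    exact mem_iInter₂.1 hω2 t (Finset.mem_filter.2 ⟨ht, hlt⟩) hω1
  have hdisj : (↑F : Set ℝ).PairwiseDisjoint A := by
    intro t ht t' ht' hne
    rcases Ne.lt_or_gt hne with h | h
    · exact hdisj0 t t' ht ht' h
    · exact (hdisj0 t' t ht' ht h).symm
  have hAfilt : ∀ t ∈ F,
      MeasurableSet[⨆ u ∈ Iic t, MeasurableSpace.comap (X u) inferInstance] (A t) := by
    intro t htF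
    have key : ∀ s : ℝ, s ≤ t →
        MeasurableSet[⨆ u ∈ Iic t, MeasurableSpace.comap (X u) inferInstance] {ω | X s ω < c} := by
      intro s hs
      have h1 : MeasurableSet[MeasurableSpace.comap (X s) inferInstance] {ω | X s ω < c} :=
        ⟨Iio c, measurableSet_Iio, rfl⟩
      have h2 : (MeasurableSpace.comap (X s) inferInstance : MeasurableSpace Ω) ≤
          ⨆ u ∈ Iic t, MeasurableSpace.comap (X u) inferInstance :=
        le_iSup₂ (f := fun u (_ : u ∈ Iic t) => MeasurableSpace.comap (X u) inferInstance) s hs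
      exact h2 _ h1
    refine MeasurableSet.inter (key t le_rfl) ?_
    refine MeasurableSet.biInter (Finset.countable_toSet _) (fun u hu => ?_)
    have hu' : u ∈ F.filter (fun v => v < t) := hu
    rw [Finset.mem_filter] at hu'
    exact (key u hu'.2.le).compl
  have hsplit : ∀ t ∈ F, P (A t ∩ {ω | a < X T ω - X t ω}) =
      P (A t) * P {ω | a < X T ω - X t ω} := by
    intro t htF
    have ht := hF htF
    have hI := hindep t T ht.1 ht.2
    rw [Indep_iff] at hI
    exact hI _ _ (hAfilt t htF) ⟨Ioi a, measurableSet_Ioi, rfl⟩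
  have hincl : (⋃ t ∈ F, A t) ⊆
      {ω | X T ω < c + a} ∪ ⋃ t ∈ F, (A t ∩ {ω | a < X T ω - X t ω}) := by
    intro ω hω
    rw [mem_iUnion₂] at hω
    obtain ⟨t, htF, hωt⟩ := hω
    by_cases h : a < X T ω - X t ω
    · exact Or.inr (mem_iUnion₂.2 ⟨t, htF, hωt, h⟩)
    · left
      have h1 : X t ω < c := hωt.1
      push_neg at h
      simp only [mem_setOf_eq]
      linarith
  have hsum : P (⋃ t ∈ F, A t) = ∑ t ∈ F, P (A t) :=
    measure_biUnion_finset hdisj (fun t _ => hAmeas t)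
  have hxfin : P (⋃ t ∈ F, A t) ≠ ⊤ := measure_ne_top _ _
  have hhalf' : ENNReal.ofReal (1/2) = (2 : ℝ≥0∞)⁻¹ := by
    rw [one_div, ENNReal.ofReal_inv_of_pos (show (0:ℝ) < 2 by norm_num)]
    norm_num
  have hmain : P (⋃ t ∈ F, A t) ≤ P {ω | X T ω < c + a} + P (⋃ t ∈ F, A t) * 2⁻¹ := by
    calc P (⋃ t ∈ F, A t)
        ≤ P ({ω | X T ω < c + a} ∪ ⋃ t ∈ F, (A t ∩ {ω | a < X T ω - X t ω})) :=
          measure_mono hincl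
      _ ≤ P {ω | X T ω < c + a} + P (⋃ t ∈ F, (A t ∩ {ω | a < X T ω - X t ω})) :=
          measure_union_le _ _
      _ ≤ P {ω | X T ω < c + a} + ∑ t ∈ F, P (A t ∩ {ω | a < X T ω - X t ω}) := by
          gcongr
          exact measure_biUnion_finset_le _ _
      _ ≤ P {ω | X T ω < c + a} + ∑ t ∈ F, P (A t) * 2⁻¹ := by
          gcongr with t htF
          rw [hsplit t htF]
          exact mul_le_mul_right (le_trans (hhalf t (hF htF)) (le_of_eq hhalf')) _
      _ = P {ω | X T ω < c + a} + P (⋃ t ∈ F, A t) * 2⁻¹ := by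
          rw [← Finset.sum_mul, hsum]
  have h2 : P (⋃ t ∈ F, A t) + P (⋃ t ∈ F, A t) ≤
      2 * P {ω | X T ω < c + a} + P (⋃ t ∈ F, A t) := by
    calc P (⋃ t ∈ F, A t) + P (⋃ t ∈ F, A t) = 2 * P (⋃ t ∈ F, A t) := (two_mul _).symm
      _ ≤ 2 * (P {ω | X T ω < c + a} + P (⋃ t ∈ F, A t) * 2⁻¹) := mul_le_mul_right hmain 2
      _ = 2 * P {ω | X T ω < c + a} + 2 * (P (⋃ t ∈ F, A t) * 2⁻¹) := mul_add _ _ _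
      _ = 2 * P {ω | X T ω < c + a} + P (⋃ t ∈ F, A t) := by
          congr 1
          rw [mul_comm, mul_assoc, ENNReal.inv_mul_cancel two_ne_zero ENNReal.ofNat_ne_top, mul_one]
  rw [hcover]
  exact (ENNReal.add_le_add_iff_right hxfin).1 h2

lemma aux_dyadic {T t δ : ℝ} (hT : 0 < T) (ht0 : 0 ≤ t) (hδ : 0 < δ) (hδT : t + δ ≤ T) :
    ∃ n k : ℕ, k < 2^n + 1 ∧ t ≤ (k:ℝ) * T / 2^n ∧ (k:ℝ) * T / 2^n < t + δ := by
  obtain ⟨n, hn⟩ := pow_unbounded_of_one_lt (T / δ) (one_lt_two (α := ℝ))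
  have h2 : (0:ℝ) < 2^n := by positivity
  have hTδ : T < δ * 2^n := by
    rw [div_lt_iff₀ hδ] at hn; linarith
  refine ⟨n, ⌈t * 2^n / T⌉₊, ?_, ?_, ?_⟩
  · have h1 : t * 2^n / T ≤ ((2^n : ℕ) : ℝ) := by
      push_cast
      rw [div_le_iff₀ hT]
      nlinarith
    have h3 : ⌈t * 2^n / T⌉₊ ≤ 2^n := Nat.ceil_le.2 h1
    omega
  · have h1 : t * 2^n / T ≤ (⌈t * 2^n / T⌉₊ : ℝ) := Nat.le_ceil _
    rw [div_le_iff₀ hT] at h1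
    rw [le_div_iff₀ h2]
    linarith
  · have h1 : (⌈t * 2^n / T⌉₊ : ℝ) < t * 2^n / T + 1 := Nat.ceil_lt_add_one (by positivity)
    have h2' : (⌈t * 2^n / T⌉₊ : ℝ) * T < t * 2^n + T := by
      have := mul_lt_mul_of_pos_right h1 hT
      rw [add_mul, one_mul, div_mul_cancel₀ _ hT.ne'] at this
      linarith
    rw [div_lt_iff₀ h2]
    nlinarith


/-- for a Lévy process with all exponential moments
`E[e^{pX_t}] = e^{tΨ(p)}`, the running infimum satisfies
`P(inf_{t≤T} X_t ≤ log ε) ≤ K ε^p` for small `ε`, and for `S_t = S₀ e^{X_t}`,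
`P(inf_{t≤T} S_t ≤ ε) = o(ε^q)` for every `q < p`, for every `p ≥ 1`. -/
theorem levy_running_infimum_moments
    {Ω : Type*} [MeasurableSpace Ω] (P : Measure Ω) [IsProbabilityMeasure P]
    (X : ℝ → Ω → ℝ) (Ψ : ℝ → ℝ) (S₀ T : ℝ) (hS₀ : 0 < S₀) (hT : 0 < T)
    (hX0 : ∀ ω, X 0 ω = 0)
    (hmeas : ∀ t, Measurable (X t))
    (hrc : ∀ ω t, ContinuousWithinAt (fun s => X s ω) (Ici t) t)
    (hll : ∀ ω t, ∃ l : ℝ, Tendsto (fun s => X s ω) (nhdsWithin t (Iio t)) (nhds l))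
    (hstat : ∀ s t : ℝ, 0 ≤ s → 0 ≤ t →
      Measure.map (fun ω => X (s + t) ω - X s ω) P = Measure.map (X t) P)
    (hindep : ∀ s t : ℝ, 0 ≤ s → s ≤ t →
      Indep (⨆ u ∈ Iic s, MeasurableSpace.comap (X u) inferInstance)
        (MeasurableSpace.comap (fun ω => X t ω - X s ω) inferInstance) P)
    (hexp : ∀ (p : ℝ) (t : ℝ), 0 ≤ t →
      Integrable (fun ω => Real.exp (p * X t ω)) P ∧
      ∫ ω, Real.exp (p * X t ω) ∂P = Real.exp (t * Ψ p)) :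
    (∀ p : ℝ, 1 ≤ p → ∃ K > (0:ℝ), ∃ ε₀ > (0:ℝ), ∀ ε : ℝ, 0 < ε → ε < ε₀ →
      P {ω | sInf ((fun t => X t ω) '' Icc 0 T) ≤ Real.log ε} ≤
        ENNReal.ofReal (K * ε ^ p)) ∧
    (∀ p : ℝ, 1 ≤ p → ∀ q : ℝ, 0 ≤ q → q < p →
      Tendsto (fun ε : ℝ =>
          (P {ω | sInf ((fun t => S₀ * Real.exp (X t ω)) '' Icc 0 T) ≤ ε}).toReal / ε ^ q)
        (nhdsWithin 0 (Ioi 0)) (nhds 0)) := by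
  classical
  set a : ℝ := T * |Ψ 1| + Real.log 2 with ha
  -- Chebyshev upward bound: P(X_s > a) ≤ 1/2 for s ∈ [0,T]
  have stepA : ∀ s ∈ Icc (0:ℝ) T, P {ω | a < X s ω} ≤ ENNReal.ofReal (1/2) := by
    intro s hs
    obtain ⟨hint, hval⟩ := hexp 1 s hs.1
    have hE : ∀ ω ∈ {ω | a < X s ω}, Real.exp a ≤ Real.exp (1 * X s ω) := by
      intro ω hω
      rw [one_mul]
      exact (Real.exp_lt_exp.2 hω).le
    have h1 := aux_cheb P (fun ω => Real.exp (1 * X s ω)) (fun ω => (Real.exp_pos _).le)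
      hint (Real.exp_pos a) hE
    refine h1.trans (ENNReal.ofReal_le_ofReal ?_)
    rw [hval, ← Real.exp_sub]
    have h2 : s * Ψ 1 - a ≤ -Real.log 2 := by
      have h3 : s * Ψ 1 ≤ s * |Ψ 1| := mul_le_mul_of_nonneg_left (le_abs_self _) hs.1
      have h4 : s * |Ψ 1| ≤ T * |Ψ 1| := mul_le_mul_of_nonneg_right hs.2 (abs_nonneg _)
      simp only [ha]; linarith
    calc Real.exp (s * Ψ 1 - a) ≤ Real.exp (-Real.log 2) := Real.exp_le_exp.2 h2
      _ = 1/2 := by rw [Real.exp_neg, Real.exp_log two_pos]; norm_num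
  -- stationary increments: P(X_T - X_t > a) ≤ 1/2
  have hhalf : ∀ t ∈ Icc (0:ℝ) T, P {ω | a < X T ω - X t ω} ≤ ENNReal.ofReal (1/2) := by
    intro t ht
    have h1 := hstat t (T - t) ht.1 (by linarith [ht.2])
    rw [show t + (T - t) = T by ring] at h1
    have hm1 : Measurable (fun ω => X T ω - X t ω) := (hmeas T).sub (hmeas t)
    have h2 : P {ω | a < X T ω - X t ω} = P {ω | a < X (T - t) ω} := by
      have e1 : {ω | a < X T ω - X t ω} = (fun ω => X T ω - X t ω) ⁻¹' (Ioi a) := rfl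
      have e2 : {ω | a < X (T - t) ω} = (X (T - t)) ⁻¹' (Ioi a) := rfl
      rw [e1, e2, ← Measure.map_apply hm1 measurableSet_Ioi,
        ← Measure.map_apply (hmeas _) measurableSet_Ioi, h1]
    rw [h2]
    exact stepA (T - t) ⟨by linarith [ht.2], by linarith [ht.1]⟩
  -- Chebyshev downward bound
  have stepB : ∀ p : ℝ, 0 ≤ p → ∀ c' : ℝ, P {ω | X T ω < c'} ≤
      ENNReal.ofReal (Real.exp (T * Ψ (-p)) * Real.exp (p * c')) := by
    intro p hp c'
    obtain ⟨hint, hval⟩ := hexp (-p) T hT.le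
    have hE : ∀ ω ∈ {ω | X T ω < c'}, Real.exp (-p * c') ≤ Real.exp (-p * X T ω) := by
      intro ω hω
      exact Real.exp_le_exp.2 (mul_le_mul_of_nonpos_left (le_of_lt hω) (neg_nonpos.2 hp))
    have h1 := aux_cheb P (fun ω => Real.exp (-p * X T ω)) (fun ω => (Real.exp_pos _).le)
      hint (Real.exp_pos (-p * c')) hE
    refine h1.trans (ENNReal.ofReal_le_ofReal ?_)
    rw [hval, div_eq_mul_inv, ← Real.exp_neg]
    apply le_of_eq
    congr 1
    ring
  -- core estimate via reflection and dyadic approximation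
  have core : ∀ p : ℝ, 0 ≤ p → ∀ c : ℝ, P {ω | ∃ t ∈ Icc 0 T, X t ω < c} ≤
      ENNReal.ofReal (2 * (Real.exp (T * Ψ (-p)) * Real.exp (p * (c + a)))) := by
    intro p hp c
    set Fd : ℕ → Finset ℝ :=
      fun n => (Finset.range (2^n + 1)).image (fun k : ℕ => (k:ℝ) * T / 2^n) with hFd
    have hFsub : ∀ n, ↑(Fd n) ⊆ Icc (0:ℝ) T := by
      intro n t ht
      simp only [hFd, Finset.coe_image, mem_image, Finset.mem_coe, Finset.mem_range] at ht
      obtain ⟨k, hk, rfl⟩ := ht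
      have h2 : (0:ℝ) < 2^n := by positivity
      have hk' : (k:ℝ) ≤ 2^n := by
        have : (k:ℝ) ≤ ((2^n : ℕ) : ℝ) := Nat.cast_le.2 (by omega)
        push_cast at this; linarith
      constructor
      · positivity
      · rw [div_le_iff₀ h2]; nlinarith
    have hcover : {ω | ∃ t ∈ Icc 0 T, X t ω < c} = ⋃ n, ⋃ t ∈ Fd n, {ω | X t ω < c} := by
      ext ω
      simp only [mem_setOf_eq, mem_iUnion, exists_prop]
      constructor
      · rintro ⟨t, ht, hXt⟩
        rcases eq_or_lt_of_le ht.2 with hteq | htlt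
        · refine ⟨0, T, ?_, by rwa [← hteq]⟩
          simp only [hFd, Finset.mem_image, Finset.mem_range]
          exact ⟨1, by norm_num, by norm_num⟩
        · -- use right-continuity to find a dyadic point
          have hnb : {s | X s ω < c} ∈ nhdsWithin t (Ici t) :=
            hrc ω t (isOpen_Iio.mem_nhds (by simpa using hXt))
          rw [Metric.mem_nhdsWithin_iff] at hnb
          obtain ⟨δ, hδ, hball⟩ := hnb
          set δ' := min δ (T - t) with hδ'
          have hδ'pos : 0 < δ' := lt_min hδ (by linarith)
          obtain ⟨n, k, hk, hk1, hk2⟩ := aux_dyadic hT ht.1 hδ'pos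
            (by simp only [hδ']; rw [add_comm]; nlinarith [min_le_right δ (T - t)])
          refine ⟨n, (k:ℝ) * T / 2^n, ?_, ?_⟩
          · simp only [hFd, Finset.mem_image, Finset.mem_range]
            exact ⟨k, hk, rfl⟩
          · apply hball
            constructor
            · rw [Metric.mem_ball, Real.dist_eq, abs_sub_lt_iff]
              constructor
              · have : δ' ≤ δ := min_le_left _ _
                linarith
              · linarith
            · exact hk1
      · rintro ⟨n, t, ht, hXt⟩
        exact ⟨t, hFsub n ht, hXt⟩
    have hmono : Monotone (fun n => ⋃ t ∈ Fd n, {ω | X t ω < c}) := by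
      intro n m hnm
      apply iUnion₂_subset
      intro t ht
      have htm : t ∈ Fd m := by
        simp only [hFd, Finset.mem_image, Finset.mem_range] at ht ⊢
        obtain ⟨k, hk, rfl⟩ := ht
        refine ⟨k * 2^(m - n), ?_, ?_⟩
        · have h1 : k * 2^(m-n) ≤ 2^n * 2^(m-n) := by
            apply Nat.mul_le_mul_right; omega
          rw [← pow_add] at h1
          have : n + (m - n) = m := by omega
          rw [this] at h1
          omega
        · have hmn : n + (m - n) = m := by omega
          push_cast
          rw [← hmn, pow_add]
          have h2n : (0:ℝ) < 2^n := by positivity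
          have h2m : (0:ℝ) < 2^(m-n) := by positivity
          field_simp
          ring_nf
          simp
      exact subset_iUnion₂_of_subset t htm (subset_refl _)
    have hdir : Directed (· ⊆ ·) (fun n => ⋃ t ∈ Fd n, {ω | X t ω < c}) :=
      hmono.directed_le
    have hsup : P {ω | ∃ t ∈ Icc 0 T, X t ω < c} = ⨆ n, P (⋃ t ∈ Fd n, {ω | X t ω < c}) := by
      rw [hcover]
      exact hdir.measure_iUnion
    rw [hsup]
    apply iSup_le
    intro n
    calc P (⋃ t ∈ Fd n, {ω | X t ω < c}) ≤ 2 * P {ω | X T ω < c + a} :=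
          aux_reflection P X T a c hmeas hindep hhalf (Fd n) (hFsub n)
      _ ≤ 2 * ENNReal.ofReal (Real.exp (T * Ψ (-p)) * Real.exp (p * (c + a))) := by
          gcongr
          exact stepB p hp (c + a)
      _ = ENNReal.ofReal (2 * (Real.exp (T * Ψ (-p)) * Real.exp (p * (c + a)))) := by
          rw [ENNReal.ofReal_mul (by norm_num : (0:ℝ) ≤ 2)]
          norm_num
  constructor
  · -- Part 1
    intro p hp
    refine ⟨2 * Real.exp (T * Ψ (-p)) * Real.exp (p * (1 + a)), by positivity, 1, one_pos, ?_⟩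
    intro ε hε hε1
    have hsub : {ω | sInf ((fun t => X t ω) '' Icc 0 T) ≤ Real.log ε} ⊆
        {ω | ∃ t ∈ Icc 0 T, X t ω < Real.log ε + 1} := by
      intro ω hω
      simp only [mem_setOf_eq] at hω ⊢
      have hne : ((fun t => X t ω) '' Icc 0 T).Nonempty :=
        ⟨X 0 ω, mem_image_of_mem _ (left_mem_Icc.2 hT.le)⟩
      by_cases hbdd : BddBelow ((fun t => X t ω) '' Icc 0 T)
      · have hlt : sInf ((fun t => X t ω) '' Icc 0 T) < Real.log ε + 1 := by linarith
        obtain ⟨x, hx, hxlt⟩ := (csInf_lt_iff hbdd hne).1 hlt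
        obtain ⟨t, ht, rfl⟩ := hx
        exact ⟨t, ht, hxlt⟩
      · by_contra h
        push_neg at h
        refine hbdd ⟨Real.log ε + 1, ?_⟩
        rintro x ⟨t, ht, rfl⟩
        exact h t ht
    calc P {ω | sInf ((fun t => X t ω) '' Icc 0 T) ≤ Real.log ε}
        ≤ P {ω | ∃ t ∈ Icc 0 T, X t ω < Real.log ε + 1} := measure_mono hsub
      _ ≤ ENNReal.ofReal (2 * (Real.exp (T * Ψ (-p)) * Real.exp (p * (Real.log ε + 1 + a)))) :=
          core p (by linarith) _
      _ = ENNReal.ofReal (2 * Real.exp (T * Ψ (-p)) * Real.exp (p * (1 + a)) * ε ^ p) := by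
          congr 1
          rw [Real.rpow_def_of_pos hε,
            show p * (Real.log ε + 1 + a) = p * (1 + a) + Real.log ε * p by ring, Real.exp_add]
          ring
  · -- Part 2
    intro p hp q hq0 hqp
    set p' : ℝ := q + 1 with hp'
    have hp'0 : (0:ℝ) ≤ p' := by linarith
    set C : ℝ := 2 * Real.exp (T * Ψ (-p')) * Real.exp (p' * a) * (2 / S₀) ^ p' with hC
    have hCpos : 0 ≤ C := by
      apply mul_nonneg
      · positivity
      · exact Real.rpow_nonneg (by positivity) _
    have hbound : ∀ ε : ℝ, 0 < ε →
        (P {ω | sInf ((fun t => S₀ * Real.exp (X t ω)) '' Icc 0 T) ≤ ε}).toReal / ε ^ q ≤ C * ε := by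
      intro ε hε
      have h2εS : (0:ℝ) < 2 * ε / S₀ := by positivity
      have hsub : {ω | sInf ((fun t => S₀ * Real.exp (X t ω)) '' Icc 0 T) ≤ ε} ⊆
          {ω | ∃ t ∈ Icc 0 T, X t ω < Real.log (2 * ε / S₀)} := by
        intro ω hω
        simp only [mem_setOf_eq] at hω ⊢
        have hne : ((fun t => S₀ * Real.exp (X t ω)) '' Icc 0 T).Nonempty :=
          ⟨S₀ * Real.exp (X 0 ω), mem_image_of_mem _ (left_mem_Icc.2 hT.le)⟩
        have hbdd : BddBelow ((fun t => S₀ * Real.exp (X t ω)) '' Icc 0 T) := by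
          refine ⟨0, ?_⟩
          rintro x ⟨t, ht, rfl⟩
          positivity
        have hlt : sInf ((fun t => S₀ * Real.exp (X t ω)) '' Icc 0 T) < 2 * ε := by linarith
        obtain ⟨x, hx, hxlt⟩ := (csInf_lt_iff hbdd hne).1 hlt
        obtain ⟨t, ht, rfl⟩ := hx
        refine ⟨t, ht, ?_⟩
        have h1 : Real.exp (X t ω) < 2 * ε / S₀ := by
          rw [lt_div_iff₀ hS₀, mul_comm]
          exact hxlt
        calc X t ω = Real.log (Real.exp (X t ω)) := (Real.log_exp _).symm
          _ < Real.log (2 * ε / S₀) := Real.log_lt_log (Real.exp_pos _) h1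
      have hP : P {ω | sInf ((fun t => S₀ * Real.exp (X t ω)) '' Icc 0 T) ≤ ε} ≤
          ENNReal.ofReal (C * ε ^ p') := by
        calc P {ω | sInf ((fun t => S₀ * Real.exp (X t ω)) '' Icc 0 T) ≤ ε}
            ≤ P {ω | ∃ t ∈ Icc 0 T, X t ω < Real.log (2 * ε / S₀)} := measure_mono hsub
          _ ≤ ENNReal.ofReal (2 * (Real.exp (T * Ψ (-p')) *
                Real.exp (p' * (Real.log (2 * ε / S₀) + a)))) := core p' hp'0 _
          _ = ENNReal.ofReal (C * ε ^ p') := by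
              congr 1
              rw [show p' * (Real.log (2 * ε / S₀) + a) = p' * a + Real.log (2 * ε / S₀) * p'
                  by ring, Real.exp_add, ← Real.rpow_def_of_pos h2εS,
                show 2 * ε / S₀ = (2 / S₀) * ε by ring,
                Real.mul_rpow (by positivity) hε.le, hC]
              ring
      have htr : (P {ω | sInf ((fun t => S₀ * Real.exp (X t ω)) '' Icc 0 T) ≤ ε}).toReal ≤
          C * ε ^ p' := ENNReal.toReal_le_of_le_ofReal
            (by positivity) hP
      have hεq : (0:ℝ) < ε ^ q := Real.rpow_pos_of_pos hε q
      rw [div_le_iff₀ hεq]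
      calc (P {ω | sInf ((fun t => S₀ * Real.exp (X t ω)) '' Icc 0 T) ≤ ε}).toReal
          ≤ C * ε ^ p' := htr
        _ = C * ε * ε ^ q := by
            rw [hp', Real.rpow_add hε, Real.rpow_one]; ring
    refine squeeze_zero' (eventually_mem_nhdsWithin.mono fun ε hε => ?_)
      (eventually_mem_nhdsWithin.mono fun ε hε => hbound ε hε) ?_
    · have hε' : (0:ℝ) < ε := hε
      have h1 : (0:ℝ) < ε ^ q := Real.rpow_pos_of_pos hε' q
      exact div_nonneg ENNReal.toReal_nonneg h1.le
    · have h2 : Tendsto (fun ε : ℝ => C * ε) (nhds 0) (nhds 0) := by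
        simpa using (continuous_mul_left C).tendsto (0:ℝ)
      exact h2.mono_left nhdsWithin_le_nhds
end
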